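/- Let Ψ be a real symmetric n×n matrix indexed by a quasi-uniform set D_n ⊂ ℝ^d, with N = ⌊n^{1/d}⌋, and suppose |Ψ_{s,t}| ≤ C (1 + N‖s−t‖₂)^{−(d+ζ)} for all s,t ∈ D_n, where C > 0 is bounded and ζ ≥ 0. Then there exist bounded constants A, A' > 0 (depending only on C, d, ζ and the quasi-uniformity constants) such that (1) the operator norm satisfies ‖Ψ‖_{2→2} ≤ A (1 + [ζ = 0]·log n), and (2) the Frobenius norm satisfies ‖Ψ‖_F ≤ A' √n. (Lemma C.2: norm bounds for symmetric matrices with polynomially decaying off-diagonals.) -/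

import Mathlib

open MeasureTheory ProbabilityTheory Filter Matrix BoundedContinuousFunction
open scoped BigOperators ENNReal NNReal Topology Classical

noncomputable section

/-- Points of `ℝ^d` with the Euclidean structure. -/
abbrev Pt (d : ℕ) := EuclideanSpace ℝ (Fin d)

/-- `N = ⌊n^(1/d)⌋`. -/
def Nof (d n : ℕ) : ℕ := Nat.floor ((n : ℝ) ^ ((1 : ℝ) / (d : ℝ)))

/-- Quasi-uniformity of the `n`-point sampling set `D ⊂ ℝ^d`: for every `s ∈ D` there is an
enumeration of `D \ {s}` which is monotone in the distance to `s` (so that its `i`-th element is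
the `i`-th nearest neighbour of `s`), whose distances obey the two-sided bound
`Cmin (i/n)^{1/d} ≤ r_{s,i} ≤ Cmax (i/n)^{1/d}`. -/
def QuasiUniform (d n : ℕ) (Cmin Cmax : ℝ) (D : Finset (Pt d)) : Prop :=
  D.card = n ∧
  ∀ s ∈ D, ∃ g : Fin (n - 1) → Pt d,
    (∀ i, g i ∈ D.erase s) ∧ Function.Injective g ∧
    (∀ t ∈ D.erase s, ∃ i, g i = t) ∧
    (∀ i j : Fin (n - 1), i ≤ j → dist s (g i) ≤ dist s (g j)) ∧
    (∀ i : Fin (n - 1),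
      Cmin * (((i : ℕ) + 1 : ℝ) / (n : ℝ)) ^ ((1 : ℝ) / (d : ℝ)) ≤ dist s (g i) ∧
      dist s (g i) ≤ Cmax * (((i : ℕ) + 1 : ℝ) / (n : ℝ)) ^ ((1 : ℝ) / (d : ℝ)))

/-- Preconditioning neighbourhoods `nb` and coefficients `a` of order `m` for the set `D`:
each `N_m(s) = nb s` lies in `D` within distance `c₀/N` of `s`; the coefficients annihilate all
monomials `(t-s)^r` with `|r|₁ < m`, do not annihilate some monomial with `|r|₁ ≥ m`, and are
normalized in Euclidean norm. -/
def PrecondCoeffs (d m : ℕ) (c₀ : ℝ) (N : ℕ) (D : Finset (Pt d))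
    (nb : Pt d → Finset (Pt d)) (a : Pt d → Pt d → ℝ) : Prop :=
  ∀ s ∈ D,
    nb s ⊆ D ∧
    (∀ t ∈ nb s, ‖t - s‖ ≤ c₀ / (N : ℝ)) ∧
    (∀ r : Fin d → ℕ, (∑ j, r j) < m →
      (∑ t ∈ nb s, a s t * ∏ j, (t j - s j) ^ r j) = 0) ∧
    (∃ r : Fin d → ℕ, m ≤ (∑ j, r j) ∧
      (∑ t ∈ nb s, a s t * ∏ j, (t j - s j) ^ r j) ≠ 0) ∧
    (∑ t ∈ nb s, (a s t) ^ 2) = 1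

/-- The Fourier filter `f^N_s(ω)` of the preconditioning coefficients. -/
def fN (d : ℕ) (ν : ℝ) (N : ℕ) (nb : Pt d → Finset (Pt d))
    (a : Pt d → Pt d → ℝ) (s ω : Pt d) : ℂ :=
  ((‖ω‖ ^ (-(ν + (d : ℝ) / 2)) : ℝ) : ℂ) *
    ∑ t ∈ nb s, ((a s t : ℝ) : ℂ) *
      Complex.exp (Complex.I * ((inner ℝ ((N : ℝ) • ω) (t - s) : ℝ) : ℂ))

/-- `h_N(x) = (1 + (Nx)^{-2})^{-(ν + d/2)}`. -/
def hN (d : ℕ) (ν : ℝ) (N : ℕ) (x : ℝ) : ℝ :=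
  (1 + ((N : ℝ) * x) ^ (-(2 : ℝ))) ^ (-(ν + (d : ℝ) / 2))

/-- The matrix `K_{n,m}(ρ)`, the `φ₀`-normalized covariance matrix of the preconditioned data,
given through its spectral representation. -/
def Kmat {d : ℕ} (ν : ℝ) (N : ℕ) (D : Finset (Pt d))
    (nb : Pt d → Finset (Pt d)) (a : Pt d → Pt d → ℝ) (ρ : ℝ) :
    Matrix D D ℝ :=
  Matrix.of fun s t =>
    ρ ^ (-(2 * ν)) *
      (∫ (ω : Pt d),
        Complex.exp (Complex.I * ((inner ℝ ((t : Pt d) - (s : Pt d)) ω : ℝ) : ℂ)) *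
          fN d ν N nb a (s : Pt d) ω * (starRingEnd ℂ) (fN d ν N nb a (t : Pt d) ω) *
          ((hN d ν N (ρ * ‖ω‖) : ℝ) : ℂ)).re

/-- Block-diagonal restriction of a matrix along the partition determined by a labelling `bin`. -/
def bdiag {d : ℕ} {D : Finset (Pt d)} (bin : Pt d → ℕ) (A : Matrix D D ℝ) :
    Matrix D D ℝ :=
  Matrix.of fun s t => if bin (s : Pt d) = bin (t : Pt d) then A s t else 0

/-- `L_{n,m}(ρ) = ρ^{2ν} K_{n,m}(ρ)`. -/
def Lmat {d : ℕ} (ν : ℝ) (N : ℕ) (D : Finset (Pt d))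
    (nb : Pt d → Finset (Pt d)) (a : Pt d → Pt d → ℝ) (ρ : ℝ) :
    Matrix D D ℝ :=
  ρ ^ (2 * ν) • Kmat ν N D nb a ρ

/-- `K^B_{n,m}(ρ)`: the block-diagonal approximation of `K_{n,m}(ρ)`. -/
def KmatB {d : ℕ} (ν : ℝ) (N : ℕ) (D : Finset (Pt d))
    (nb : Pt d → Finset (Pt d)) (a : Pt d → Pt d → ℝ) (bin : Pt d → ℕ) (ρ : ℝ) :
    Matrix D D ℝ := bdiag bin (Kmat ν N D nb a ρ)

/-- `L^B_{n,m}(ρ) = ρ^{2ν} K^B_{n,m}(ρ)`. -/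
def LmatB {d : ℕ} (ν : ℝ) (N : ℕ) (D : Finset (Pt d))
    (nb : Pt d → Finset (Pt d)) (a : Pt d → Pt d → ℝ) (bin : Pt d → ℕ) (ρ : ℝ) :
    Matrix D D ℝ := bdiag bin (Lmat ν N D nb a ρ)

/-- Euclidean norm of a finite-dimensional real vector. -/
def eNorm {ι : Type*} [Fintype ι] (v : ι → ℝ) : ℝ := Real.sqrt (∑ i, (v i) ^ 2)

/-- Frobenius norm of a real matrix. -/
def frobNorm {ι : Type*} [Fintype ι] (A : Matrix ι ι ℝ) : ℝ :=
  Real.sqrt (∑ i, ∑ j, (A i j) ^ 2)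

/-- The `ℓ² → ℓ²` operator (spectral) norm of a real matrix. -/
def opNorm {ι : Type*} [Fintype ι] (A : Matrix ι ι ℝ) : ℝ :=
  sSup {c : ℝ | ∃ v : ι → ℝ, eNorm v ≤ 1 ∧ c = eNorm (A.mulVec v)}

/-- The square root of a positive semidefinite matrix (as `Matrix.PosSemidef.sqrt` was defined
in Mathlib of December 2024, since removed; here only for real matrices, the case used below). -/
def Matrix.PosSemidef.sqrt {n : Type*} [Fintype n] [DecidableEq n]
    {A : Matrix n n ℝ} (hA : A.PosSemidef) : Matrix n n ℝ :=
  hA.1.eigenvectorUnitary.1 * diagonal ((↑) ∘ (√·) ∘ hA.1.eigenvalues) *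
    (star hA.1.eigenvectorUnitary : Matrix n n ℝ)

/-- The nuclear norm (sum of singular values): trace of the psd square root of `Aᵀ A`. -/
def nucNorm {ι : Type*} [Fintype ι] [DecidableEq ι] (A : Matrix ι ι ℝ) : ℝ :=
  (Matrix.posSemidef_conjTranspose_mul_self A).sqrt.trace

/-- The standard Gaussian product measure on `ι → ℝ`. -/
def stdGaussianPi (ι : Type*) [Fintype ι] : Measure (ι → ℝ) :=
  Measure.pi fun _ => gaussianReal 0 1

end

section AuxLemC2

private lemma schur_opNorm {ι : Type*} [Fintype ι] (A : Matrix ι ι ℝ) (R : ℝ) (hR : 0 ≤ R)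
    (hrow : ∀ i, ∑ j, |A i j| ≤ R) (hcol : ∀ j, ∑ i, |A i j| ≤ R) :
    opNorm A ≤ R := by
  classical
  refine Real.sSup_le ?_ hR
  rintro c ⟨v, hv, rfl⟩
  simp only [eNorm] at hv ⊢
  have h0 : (0:ℝ) ≤ ∑ j, v j ^ 2 := Finset.sum_nonneg fun _ _ => sq_nonneg _
  have hv2 : ∑ j, v j ^ 2 ≤ 1 := by
    nlinarith [Real.sq_sqrt h0, Real.sqrt_nonneg (∑ j, v j ^ 2)]
  have key : ∀ i, (∑ j, A i j * v j) ^ 2 ≤ R * ∑ j, |A i j| * v j ^ 2 := by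
    intro i
    have h1 : (∑ j, A i j * v j) ^ 2 ≤ (∑ j, |A i j * v j|) ^ 2 := by
      rw [← sq_abs]
      exact pow_le_pow_left₀ (abs_nonneg _) (Finset.abs_sum_le_sum_abs _ _) 2
    have h2 : (∑ j, |A i j * v j|) ^ 2 ≤ (∑ j, |A i j|) * ∑ j, |A i j| * v j ^ 2 := by
      have hC := Finset.sum_mul_sq_le_sq_mul_sq Finset.univ
        (fun j => Real.sqrt |A i j|) (fun j => Real.sqrt |A i j| * |v j|)
      have e1 : ∀ j : ι, Real.sqrt |A i j| * (Real.sqrt |A i j| * |v j|) = |A i j * v j| := by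
        intro j
        rw [← mul_assoc, Real.mul_self_sqrt (abs_nonneg _), abs_mul]
      have e2 : ∀ j : ι, Real.sqrt |A i j| ^ 2 = |A i j| := fun j => Real.sq_sqrt (abs_nonneg _)
      have e3 : ∀ j : ι, (Real.sqrt |A i j| * |v j|) ^ 2 = |A i j| * v j ^ 2 := by
        intro j; rw [mul_pow, Real.sq_sqrt (abs_nonneg _), sq_abs]
      simp only [e1, e2, e3] at hC
      exact hC
    have hnn : (0:ℝ) ≤ ∑ j, |A i j| * v j ^ 2 :=
      Finset.sum_nonneg fun j _ => mul_nonneg (abs_nonneg _) (sq_nonneg _)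
    calc (∑ j, A i j * v j) ^ 2 ≤ (∑ j, |A i j|) * ∑ j, |A i j| * v j ^ 2 := h1.trans h2
      _ ≤ R * ∑ j, |A i j| * v j ^ 2 := mul_le_mul_of_nonneg_right (hrow i) hnn
  have main : ∑ i, (A.mulVec v i) ^ 2 ≤ R ^ 2 := by
    calc ∑ i, (A.mulVec v i) ^ 2 = ∑ i, (∑ j, A i j * v j) ^ 2 := by
          simp [Matrix.mulVec, dotProduct]
      _ ≤ ∑ i, R * ∑ j, |A i j| * v j ^ 2 := Finset.sum_le_sum fun i _ => key i
      _ = R * ∑ j, (∑ i, |A i j|) * v j ^ 2 := by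
          rw [← Finset.mul_sum, Finset.sum_comm]
          simp_rw [← Finset.sum_mul]
      _ ≤ R * ∑ j, R * v j ^ 2 := by
          refine mul_le_mul_of_nonneg_left (Finset.sum_le_sum fun j _ => ?_) hR
          exact mul_le_mul_of_nonneg_right (hcol j) (sq_nonneg _)
      _ = R * (R * ∑ j, v j ^ 2) := by rw [← Finset.mul_sum]
      _ ≤ R * (R * 1) := by
          exact mul_le_mul_of_nonneg_left (mul_le_mul_of_nonneg_left hv2 hR) hR
      _ = R ^ 2 := by ring
  have hfinal := Real.sqrt_le_sqrt main
  rwa [Real.sqrt_sq hR] at hfinal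

private lemma rowsum_bound {d n : ℕ} {Cmin Cmax : ℝ} (hCmin : 0 < Cmin)
    {D : Finset (Pt d)} (hQ : QuasiUniform d n Cmin Cmax D) {s : Pt d} (hs : s ∈ D)
    (p : ℝ) (hp : 0 ≤ p) :
    ∑ t ∈ D, (1 + (Nof d n : ℝ) * ‖s - t‖) ^ (-p) ≤
      1 + (Cmin / 2) ^ (-p) *
        ∑ k ∈ Finset.range (n - 1), ((k : ℝ) + 1) ^ (-(p / (d : ℝ))) := by
  obtain ⟨hcard, hQ2⟩ := hQ
  obtain ⟨g, hgmem, hginj, hgsurj, -, hgdist⟩ := hQ2 s hs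
  have hn1 : 1 ≤ n := by
    rw [← hcard]; exact Finset.card_pos.mpr ⟨s, hs⟩
  rw [← Finset.add_sum_erase _ _ hs]
  have hss : (1 + (Nof d n : ℝ) * ‖s - s‖) ^ (-p) = 1 := by
    simp
  set x : ℝ := (n : ℝ) ^ ((1:ℝ)/(d:ℝ)) with hxdef
  have hx1 : (1:ℝ) ≤ x := Real.one_le_rpow (by exact_mod_cast hn1) (by positivity)
  have hxpos : (0:ℝ) < x := lt_of_lt_of_le one_pos hx1
  have hfloor1 : 1 ≤ Nof d n := Nat.le_floor (by exact_mod_cast hx1)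
  have hN : x / 2 ≤ (Nof d n : ℝ) := by
    have h1 : x - 1 < (Nof d n : ℝ) := Nat.sub_one_lt_floor x
    have h2 : (1:ℝ) ≤ (Nof d n : ℝ) := by exact_mod_cast hfloor1
    linarith
  have hterm : ∀ i : Fin (n-1),
      (1 + (Nof d n : ℝ) * ‖s - g i‖) ^ (-p)
        ≤ (Cmin/2) ^ (-p) * (((i:ℕ):ℝ) + 1) ^ (-(p/(d:ℝ))) := by
    intro i
    have hd1 := (hgdist i).1
    have hin : (0:ℝ) ≤ ((i:ℕ):ℝ) + 1 := by positivity
    set y : ℝ := (((i:ℕ):ℝ) + 1) ^ ((1:ℝ)/(d:ℝ)) with hydef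
    have hy0 : (0:ℝ) ≤ y := Real.rpow_nonneg hin _
    have hdiv : ((((i:ℕ):ℝ) + 1) / (n:ℝ)) ^ ((1:ℝ)/(d:ℝ)) = y / x := by
      rw [Real.div_rpow hin (by positivity)]
    have hdist0 : (0:ℝ) ≤ dist s (g i) := dist_nonneg
    have h3 : Cmin * (y / x) ≤ dist s (g i) := by
      rw [← hdiv]; exact hd1
    have hlow : (Cmin/2) * y ≤ 1 + (Nof d n : ℝ) * ‖s - g i‖ := by
      have h4 : (x/2) * dist s (g i) ≤ (Nof d n : ℝ) * dist s (g i) :=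
        mul_le_mul_of_nonneg_right hN hdist0
      have h5 : (Cmin/2) * y ≤ (x/2) * dist s (g i) := by
        have h6 := mul_le_mul_of_nonneg_left h3 (by positivity : (0:ℝ) ≤ x/2)
        have h7 : (x/2) * (Cmin * (y / x)) = (Cmin/2) * y := by
          field_simp
        linarith
      rw [dist_eq_norm] at h4 h5
      linarith
    have hbpos : (0:ℝ) < (Cmin/2) * y := by
      have : (0:ℝ) < y := Real.rpow_pos_of_pos (by positivity) _
      positivity
    have hmono := Real.rpow_le_rpow_of_nonpos hbpos hlow (neg_nonpos.mpr hp)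
    calc (1 + (Nof d n : ℝ) * ‖s - g i‖) ^ (-p) ≤ ((Cmin/2) * y) ^ (-p) := hmono
      _ = (Cmin/2) ^ (-p) * y ^ (-p) := Real.mul_rpow (by positivity) hy0
      _ = (Cmin/2) ^ (-p) * (((i:ℕ):ℝ) + 1) ^ (-(p/(d:ℝ))) := by
          rw [hydef, ← Real.rpow_mul hin]
          congr 1
          ring
  have hbij : ∑ t ∈ D.erase s, (1 + (Nof d n : ℝ) * ‖s - t‖) ^ (-p)
      = ∑ i : Fin (n-1), (1 + (Nof d n : ℝ) * ‖s - g i‖) ^ (-p) := by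
    refine (Finset.sum_bij (fun (i : Fin (n-1)) (_ : i ∈ Finset.univ) => g i)
      (fun i _ => hgmem i) (fun i₁ _ i₂ _ h => hginj h) (fun t ht => ?_)
      (fun i _ => rfl)).symm
    obtain ⟨i, hi⟩ := hgsurj t ht
    exact ⟨i, Finset.mem_univ i, hi⟩
  rw [hss, hbij]
  have hsumle : ∑ i : Fin (n-1), (1 + (Nof d n : ℝ) * ‖s - g i‖) ^ (-p)
      ≤ ∑ i : Fin (n-1), (Cmin/2) ^ (-p) * (((i:ℕ):ℝ) + 1) ^ (-(p/(d:ℝ))) :=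
    Finset.sum_le_sum fun i _ => hterm i
  have heq : ∑ i : Fin (n-1), (Cmin/2) ^ (-p) * (((i:ℕ):ℝ) + 1) ^ (-(p/(d:ℝ)))
      = (Cmin/2) ^ (-p) * ∑ k ∈ Finset.range (n-1), ((k:ℝ) + 1) ^ (-(p/(d:ℝ))) := by
    rw [← Finset.mul_sum,
      Fin.sum_univ_eq_sum_range (fun k => ((k:ℝ) + 1) ^ (-(p/(d:ℝ))))]
  linarith [hsumle, heq.le, heq.ge]

private lemma tail_tsum_bound {p : ℝ} (hp : 1 < p) (m : ℕ) :
    ∑ k ∈ Finset.range m, ((k:ℝ)+1) ^ (-p) ≤ ∑' k : ℕ, ((k:ℝ)+1) ^ (-p) := by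
  have hsum : Summable (fun k : ℕ => ((k:ℝ)+1) ^ (-p)) := by
    have h := Real.summable_nat_rpow.mpr (by linarith : -p < -1)
    have h2 := (summable_nat_add_iff 1).mpr h
    refine h2.congr fun k => ?_
    push_cast
    norm_num
  exact Summable.sum_le_tsum _ (fun k _ => Real.rpow_nonneg (by positivity) _) hsum

private lemma tail_tsum_nonneg (p : ℝ) : (0:ℝ) ≤ ∑' k : ℕ, ((k:ℝ)+1) ^ (-p) :=
  tsum_nonneg fun k => Real.rpow_nonneg (by positivity) _

private lemma harm_bound (n : ℕ) :
    ∑ k ∈ Finset.range (n-1), ((k:ℝ)+1) ^ (-(1:ℝ)) ≤ 1 + Real.log n := by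
  have h1 : ∑ k ∈ Finset.range (n-1), ((k:ℝ)+1) ^ (-(1:ℝ))
      = ((harmonic (n-1) : ℚ) : ℝ) := by
    rw [harmonic]
    push_cast
    refine Finset.sum_congr rfl fun k _ => ?_
    rw [Real.rpow_neg_one]
  rw [h1]
  have h2 := harmonic_le_one_add_log (n-1)
  have h3 : Real.log ((n-1 : ℕ) : ℝ) ≤ Real.log n := by
    rcases Nat.eq_zero_or_pos (n - 1) with h | h
    · rw [h]
      simp only [Nat.cast_zero, Real.log_zero]
      rcases Nat.eq_zero_or_pos n with h' | h'
      · simp [h']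
      · exact Real.log_nonneg (by exact_mod_cast h')
    · exact Real.log_le_log (by exact_mod_cast h) (by exact_mod_cast Nat.sub_le n 1)
  linarith

private lemma absrow {d n : ℕ} {Cmin Cmax C ζ : ℝ} (hCmin : 0 < Cmin) (hC : 0 < C)
    (hζ : 0 ≤ ζ) {D : Finset (Pt d)} (hQ : QuasiUniform d n Cmin Cmax D)
    (Ψ : Matrix D D ℝ)
    (hb : ∀ s t : D, |Ψ s t| ≤
      C * (1 + (Nof d n : ℝ) * ‖(s : Pt d) - (t : Pt d)‖) ^ (-((d:ℝ)+ζ)))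
    (i : D) :
    ∑ j : D, |Ψ i j| ≤ C * (1 + (Cmin/2) ^ (-((d:ℝ)+ζ)) *
      ∑ k ∈ Finset.range (n-1), ((k:ℝ)+1) ^ (-(((d:ℝ)+ζ)/(d:ℝ)))) := by
  have hp : (0:ℝ) ≤ (d:ℝ)+ζ := add_nonneg (Nat.cast_nonneg d) hζ
  calc ∑ j : D, |Ψ i j|
      ≤ ∑ j : D, C * (1 + (Nof d n : ℝ) * ‖(i : Pt d) - (j : Pt d)‖) ^ (-((d:ℝ)+ζ)) :=
        Finset.sum_le_sum fun j _ => hb i j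
    _ = C * ∑ t ∈ D, (1 + (Nof d n : ℝ) * ‖(i : Pt d) - t‖) ^ (-((d:ℝ)+ζ)) := by
        rw [← Finset.mul_sum]
        congr 1
        exact Finset.sum_coe_sort D
          (fun t => (1 + (Nof d n : ℝ) * ‖(i : Pt d) - t‖) ^ (-((d:ℝ)+ζ)))
    _ ≤ C * (1 + (Cmin/2) ^ (-((d:ℝ)+ζ)) *
        ∑ k ∈ Finset.range (n-1), ((k:ℝ)+1) ^ (-(((d:ℝ)+ζ)/(d:ℝ)))) :=
        mul_le_mul_of_nonneg_left (rowsum_bound hCmin hQ i.2 _ hp) hC.le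

end AuxLemC2
/-- **Lemma C.2.**  A real symmetric matrix `Ψ` on a quasi-uniform set `Dₙ` whose entries decay
like `|Ψ_{s,t}| ≤ C (1 + N‖s-t‖)^{-(d+ζ)}` satisfies the operator-norm bound
`‖Ψ‖_{2→2} ≤ A (1 + [ζ = 0] log n)` and the Frobenius-norm bound `‖Ψ‖_F ≤ A' √n`, with bounded
constants `A, A'` depending only on `C, d, ζ` and the quasi-uniformity constants. -/
theorem stmt13 (d : ℕ) (Cmin Cmax C ζ : ℝ)
    (hd : 1 ≤ d) (hCmin : 0 < Cmin) (hCC : Cmin ≤ Cmax) (hC : 0 < C) (hζ : 0 ≤ ζ) :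
    ∃ A A' : ℝ, 0 < A ∧ 0 < A' ∧
      ∀ (n : ℕ) (D : Finset (Pt d)), QuasiUniform d n Cmin Cmax D →
        ∀ Ψ : Matrix D D ℝ, Ψ.IsSymm →
          (∀ s t : D,
            |Ψ s t| ≤ C * (1 + (Nof d n : ℝ) * ‖(s : Pt d) - (t : Pt d)‖) ^ (-((d : ℝ) + ζ))) →
          opNorm Ψ ≤ A * (1 + if ζ = 0 then Real.log n else 0) ∧
          frobNorm Ψ ≤ A' * Real.sqrt n := by
  classical
  have hd0 : (0:ℝ) < (d:ℝ) := by exact_mod_cast hd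
  set c : ℝ := Cmin / 2 with hcdef
  have hc0 : (0:ℝ) < c := by positivity
  -- Frobenius part constants
  set q : ℝ := 2 * ((d:ℝ) + ζ) with hqdef
  have hq0 : (0:ℝ) ≤ q := by nlinarith
  have hq1 : (1:ℝ) < q / (d:ℝ) := by
    rw [lt_div_iff₀ hd0]; nlinarith
  set T₂ : ℝ := ∑' k : ℕ, ((k:ℝ)+1) ^ (-(q / (d:ℝ))) with hT₂def
  have hT₂m : ∀ m : ℕ, ∑ k ∈ Finset.range m, ((k:ℝ)+1) ^ (-(q/(d:ℝ))) ≤ T₂ :=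
    fun m => tail_tsum_bound hq1 m
  have hT₂0 : (0:ℝ) ≤ T₂ := tail_tsum_nonneg _
  have hcq : (0:ℝ) ≤ c ^ (-q) := Real.rpow_nonneg hc0.le _
  set B : ℝ := C^2 * (1 + c ^ (-q) * T₂) with hBdef
  have hB0 : (0:ℝ) < B := by
    have h1 : (0:ℝ) < 1 + c ^ (-q) * T₂ := by nlinarith
    positivity
  -- the Frobenius bound, uniform in everything
  have frob : ∀ (n : ℕ) (D : Finset (Pt d)), QuasiUniform d n Cmin Cmax D →
      ∀ Ψ : Matrix D D ℝ,
      (∀ s t : D, |Ψ s t| ≤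
        C * (1 + (Nof d n : ℝ) * ‖(s : Pt d) - (t : Pt d)‖) ^ (-((d:ℝ)+ζ))) →
      frobNorm Ψ ≤ Real.sqrt B * Real.sqrt n := by
    intro n D hQ Ψ hb
    have hrowsq : ∀ s : D, ∑ t : D, (Ψ s t)^2 ≤ B := by
      intro s
      have h1 : ∀ t : D, (Ψ s t)^2 ≤
          C^2 * (1 + (Nof d n : ℝ) * ‖(s : Pt d) - (t : Pt d)‖) ^ (-q) := by
        intro t
        set X : ℝ := 1 + (Nof d n : ℝ) * ‖(s : Pt d) - (t : Pt d)‖ with hXdef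
        have hX1 : (1:ℝ) ≤ X := by
          have : (0:ℝ) ≤ (Nof d n : ℝ) * ‖(s : Pt d) - (t : Pt d)‖ :=
            mul_nonneg (Nat.cast_nonneg _) (norm_nonneg _)
          linarith
        have hXpos : (0:ℝ) < X := lt_of_lt_of_le one_pos hX1
        have h3 : |Ψ s t|^2 ≤ (C * X ^ (-((d:ℝ)+ζ)))^2 :=
          pow_le_pow_left₀ (abs_nonneg _) (hb s t) 2
        rw [sq_abs] at h3
        have h4 : (C * X ^ (-((d:ℝ)+ζ)))^2 = C^2 * X ^ (-q) := by
          rw [mul_pow, ← Real.rpow_natCast (X ^ (-((d:ℝ)+ζ))) 2,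
            ← Real.rpow_mul hXpos.le]
          congr 2
          push_cast
          rw [hqdef]
          ring
        rw [h4] at h3
        exact h3
      calc ∑ t : D, (Ψ s t)^2
          ≤ ∑ t : D, C^2 * (1 + (Nof d n : ℝ) * ‖(s : Pt d) - (t : Pt d)‖) ^ (-q) :=
            Finset.sum_le_sum fun t _ => h1 t
        _ = C^2 * ∑ t ∈ D, (1 + (Nof d n : ℝ) * ‖(s : Pt d) - t‖) ^ (-q) := by
            rw [← Finset.mul_sum]
            congr 1
            exact Finset.sum_coe_sort D
              (fun t => (1 + (Nof d n : ℝ) * ‖(s : Pt d) - t‖) ^ (-q))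
        _ ≤ C^2 * (1 + c ^ (-q) *
            ∑ k ∈ Finset.range (n-1), ((k:ℝ)+1) ^ (-(q/(d:ℝ)))) :=
            mul_le_mul_of_nonneg_left (rowsum_bound hCmin hQ s.2 q hq0) (sq_nonneg C)
        _ ≤ B := by
            refine mul_le_mul_of_nonneg_left ?_ (sq_nonneg C)
            have := mul_le_mul_of_nonneg_left (hT₂m (n-1)) hcq
            linarith
    have hsum : ∑ s : D, ∑ t : D, (Ψ s t)^2 ≤ (n:ℝ) * B := by
      calc ∑ s : D, ∑ t : D, (Ψ s t)^2 ≤ ∑ _s : D, B :=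
            Finset.sum_le_sum fun s _ => hrowsq s
        _ = (Fintype.card D : ℝ) * B := by
            rw [Finset.sum_const, nsmul_eq_mul, Finset.card_univ]
        _ = (n:ℝ) * B := by rw [Fintype.card_coe, hQ.1]
    have hfr : frobNorm Ψ ≤ Real.sqrt ((n:ℝ)*B) := by
      simp only [frobNorm]
      exact Real.sqrt_le_sqrt hsum
    rwa [Real.sqrt_mul (Nat.cast_nonneg n), mul_comm] at hfr
  by_cases hz : ζ = 0
  · -- ζ = 0 : logarithmic bound
    subst hz
    have hcd : (0:ℝ) ≤ c ^ (-((d:ℝ)+0)) := Real.rpow_nonneg hc0.le _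
    refine ⟨C + C * c ^ (-((d:ℝ)+0)), Real.sqrt B, by positivity,
      Real.sqrt_pos.mpr hB0, ?_⟩
    intro n D hQ Ψ hsym hb
    simp only [if_pos rfl]
    constructor
    · -- operator norm
      have hlog : (0:ℝ) ≤ Real.log n := by
        rcases Nat.eq_zero_or_pos n with h | h
        · simp [h]
        · exact Real.log_nonneg (by exact_mod_cast h)
      have hdd : ((d:ℝ)+0)/(d:ℝ) = 1 := by
        rw [add_zero]; field_simp
      have hrowA : ∀ i : D, ∑ j : D, |Ψ i j| ≤
          (C + C * c ^ (-((d:ℝ)+0))) * (1 + Real.log n) := by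
        intro i
        have h1 := absrow hCmin hC le_rfl hQ Ψ hb i
        rw [hdd] at h1
        have h2 := harm_bound n
        have h3 := mul_le_mul_of_nonneg_left h2 hcd
        nlinarith [mul_le_mul_of_nonneg_left h3 hC.le]
      refine schur_opNorm Ψ _ (by positivity) hrowA ?_
      intro j
      have : ∑ i : D, |Ψ i j| = ∑ i : D, |Ψ j i| := by
        refine Finset.sum_congr rfl fun i _ => ?_
        rw [hsym.apply]
      rw [this]
      exact hrowA j
    · exact frob n D hQ Ψ hb
  · -- ζ > 0 : constant bound
    have hz0 : (0:ℝ) < ζ := lt_of_le_of_ne hζ (Ne.symm hz)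
    have hp1 : (1:ℝ) < ((d:ℝ)+ζ) / (d:ℝ) := by
      rw [lt_div_iff₀ hd0]; linarith
    set T₁ : ℝ := ∑' k : ℕ, ((k:ℝ)+1) ^ (-(((d:ℝ)+ζ)/(d:ℝ))) with hT₁def
    have hT₁0 : (0:ℝ) ≤ T₁ := tail_tsum_nonneg _
    have hcp : (0:ℝ) ≤ c ^ (-((d:ℝ)+ζ)) := Real.rpow_nonneg hc0.le _
    have hA0 : (0:ℝ) < C * (1 + c ^ (-((d:ℝ)+ζ)) * T₁) := by
      have : (0:ℝ) ≤ c ^ (-((d:ℝ)+ζ)) * T₁ := mul_nonneg hcp hT₁0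
      nlinarith
    refine ⟨C * (1 + c ^ (-((d:ℝ)+ζ)) * T₁), Real.sqrt B, hA0,
      Real.sqrt_pos.mpr hB0, ?_⟩
    intro n D hQ Ψ hsym hb
    rw [if_neg hz]
    constructor
    · have hrowA : ∀ i : D, ∑ j : D, |Ψ i j| ≤ C * (1 + c ^ (-((d:ℝ)+ζ)) * T₁) := by
        intro i
        have h1 := absrow hCmin hC hζ hQ Ψ hb i
        have h3 := mul_le_mul_of_nonneg_left (tail_tsum_bound hp1 (n-1)) hcp
        nlinarith [mul_le_mul_of_nonneg_left h3 hC.le]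
      rw [add_zero, mul_one]
      refine schur_opNorm Ψ _ hA0.le hrowA ?_
      intro j
      have hcol : ∑ i : D, |Ψ i j| = ∑ i : D, |Ψ j i| := by
        refine Finset.sum_congr rfl fun i _ => ?_
        rw [hsym.apply]
      rw [hcol]
      exact hrowA j
    · exact frob n D hQ Ψ hb
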